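/- Let A : Fin M → (Fin N → Fin d) be an injective family of rows such that any two distinct rows agree in at most k−1 columns, and let |ψ⟩ = Σ_i |A(i)_1⟩⊗...⊗|A(i)_N⟩ (unnormalized) in (ℂ^d)^{⊗N}. Then for every subset T of columns with |T| = k, the partial trace of |ψ⟩⟨ψ| over the subsystems in T is a diagonal matrix in the computational product basis of the remaining N−k subsystems. -/
import Mathlib


theorem stmt_8 (M N d k : ℕ) (hk : 1 ≤ k)
    (A : Fin M → (Fin N → Fin d)) (hinj : Function.Injective A)
    (hagree : ∀ i j : Fin M, i ≠ j →
      (Finset.univ.filter (fun c : Fin N => A i c = A j c)).card ≤ k - 1)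
    (T : Finset (Fin N)) (hT : T.card = k)
    (x y : {c : Fin N // c ∉ T} → Fin d) (hxy : x ≠ y) :
    (∑ i : Fin M, ∑ j : Fin M,
      if (∀ c ∈ T, A i c = A j c) ∧ (∀ c : {c : Fin N // c ∉ T}, A i c = x c) ∧
          (∀ c : {c : Fin N // c ∉ T}, A j c = y c)
        then (1 : ℂ) else 0) = 0 := by
  refine Finset.sum_eq_zero fun i _ => Finset.sum_eq_zero fun j _ => ?_
  rw [if_neg]
  rintro ⟨hT', hx, hy⟩
  by_cases hij : i = j
  · subst hij
    exact hxy (funext fun c => (hx c).symm.trans (hy c))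
  · have h1 := hagree i j hij
    have h2 : T ⊆ Finset.univ.filter (fun c : Fin N => A i c = A j c) := by
      intro c hc
      simp [hT' c hc]
    have := Finset.card_le_card h2
    omega
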